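/- arXiv:2103.08782 — 2 statements merged into one kernel-verified Lean document; each statement's English description precedes it below -/
import Mathlib

section
/- Let f : ℝⁿ → ℝ and c₁,…,c_m : ℝⁿ → ℝ be continuous, let F = {z : cᵢ(z) ≥ 0 for all i} be compact, and suppose the strict interior F° = {z : cᵢ(z) > 0 for all i} is nonempty with F equal to the closure of F°. For μ > 0 define the barrier function B_μ(z) = f(z) − μ Σᵢ ln(cᵢ(z)) on F°, and suppose for each μ > 0 there exists a minimiser z_μ of B_μ over F°. Then for any sequence μ_k → 0⁺, every limit point of (z_{μ_k}) is a global minimiser of f over F. -/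
open Filter Set Finset

/-- Fiacco–McCormick barrier convergence: let `f` and the constraint functions `c i` be
continuous, let the feasible set `F = {z | ∀ i, c i z ≥ 0}` be compact, and suppose the
strict interior `F° = {z | ∀ i, c i z > 0}` is nonempty with `F = closure F°`. If for
each barrier weight `μ > 0` the barrier function `B_μ(z) = f z − μ ∑ i, log (c i z)` has a
minimiser `zmin μ ∈ F°`, then for any sequence `μ k → 0` of positive weights, every limit
point of `k ↦ zmin (μ k)` is a global minimiser of `f` over `F`. -/
theorem barrier_method_convergence (n m : ℕ)
    (f : (Fin n → ℝ) → ℝ) (hf : Continuous f)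
    (c : Fin m → (Fin n → ℝ) → ℝ) (hc : ∀ i, Continuous (c i))
    (F : Set (Fin n → ℝ)) (hF : F = {z | ∀ i, 0 ≤ c i z}) (hFcompact : IsCompact F)
    (Fint : Set (Fin n → ℝ)) (hFint : Fint = {z | ∀ i, 0 < c i z})
    (hFne : Fint.Nonempty) (hFcl : F = closure Fint)
    (B : ℝ → (Fin n → ℝ) → ℝ)
    (hB : ∀ μ z, B μ z = f z - μ * ∑ i : Fin m, Real.log (c i z))
    (zmin : ℝ → (Fin n → ℝ))
    (hzmin : ∀ μ : ℝ, 0 < μ → zmin μ ∈ Fint ∧ ∀ z ∈ Fint, B μ (zmin μ) ≤ B μ z)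
    (μ : ℕ → ℝ) (hμpos : ∀ k, 0 < μ k) (hμlim : Tendsto μ atTop (nhds 0))
    (zstar : Fin n → ℝ) (hcluster : MapClusterPt zstar atTop (fun k => zmin (μ k))) :
    zstar ∈ F ∧ ∀ z ∈ F, f zstar ≤ f z := by
  have hg : ∀ k, zmin (μ k) ∈ Fint := fun k => (hzmin (μ k) (hμpos k)).1
  have hsub : Fint ⊆ F := by
    rw [hF, hFint]; intro x hx i; exact (hx i).le
  have hgF : ∀ k, zmin (μ k) ∈ F := fun k => hsub (hg k)
  have hFclosed : IsClosed F := hFcompact.isClosed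
  have hmemF : zstar ∈ F := by
    have h1 : map (fun k => zmin (μ k)) atTop ≤ 𝓟 F :=
      le_principal_iff.2 (eventually_map.2 (Eventually.of_forall hgF))
    have h2 : ClusterPt zstar (𝓟 F) := ClusterPt.mono (x := zstar) hcluster h1
    exact hFclosed.closure_eq ▸ mem_closure_iff_clusterPt.2 h2
  refine ⟨hmemF, fun z hz => ?_⟩
  -- bound on sum of logs over F
  have hFne' : F.Nonempty := hFne.mono hsub
  have hbound : ∃ S : ℝ, ∀ x ∈ Fint, ∑ i : Fin m, Real.log (c i x) ≤ S := by
    have hM : ∀ i : Fin m, ∃ Mi : ℝ, ∀ x ∈ F, c i x ≤ Mi := by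
      intro i
      obtain ⟨x0, _, hx0⟩ := hFcompact.exists_isMaxOn hFne' (hc i).continuousOn
      exact ⟨c i x0, fun x hx => hx0 hx⟩
    choose M hM using hM
    refine ⟨∑ i : Fin m, Real.log (max (M i) 1), fun x hx => ?_⟩
    refine Finset.sum_le_sum fun i _ => ?_
    have hpos : 0 < c i x := by rw [hFint] at hx; exact hx i
    have hle : c i x ≤ max (M i) 1 := le_trans (hM i x (hsub hx)) (le_max_left _ _)
    exact Real.log_le_log hpos hle
  obtain ⟨S, hS⟩ := hbound
  -- ε argument
  refine le_of_forall_pos_le_add fun ε hε => ?_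
  -- find w ∈ Fint with f w < f z + ε/3
  have hzcl : z ∈ closure Fint := hFcl ▸ hz
  have hU : f ⁻¹' Set.Ioo (f z - ε/3) (f z + ε/3) ∈ nhds z := by
    apply hf.continuousAt.preimage_mem_nhds
    exact Ioo_mem_nhds (by linarith) (by linarith)
  obtain ⟨w, hwU, hwF⟩ := mem_closure_iff_nhds.1 hzcl _ hU
  have hfw : f w < f z + ε/3 := hwU.2
  -- key inequality: f (zmin (μ k)) ≤ f w + μ k * C
  obtain ⟨C, hC⟩ : ∃ C : ℝ, C = S - ∑ i : Fin m, Real.log (c i w) := ⟨_, rfl⟩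
  have hkey : ∀ k, f (zmin (μ k)) ≤ f w + μ k * C := by
    intro k
    have h1 := (hzmin (μ k) (hμpos k)).2 w hwF
    rw [hB, hB] at h1
    have h2 : ∑ i : Fin m, Real.log (c i (zmin (μ k))) ≤ S := hS _ (hg k)
    have h3 : 0 < μ k := hμpos k
    rw [hC]; nlinarith [h3.le, mul_le_mul_of_nonneg_left h2 h3.le]
  -- μ k * C → 0
  have hlim2 : Tendsto (fun k => f w + μ k * C) atTop (nhds (f w)) := by
    have : Tendsto (fun k => μ k * C) atTop (nhds 0) := by
      simpa using hμlim.mul_const C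
    simpa using tendsto_const_nhds.add this
  have hev : ∀ᶠ k in atTop, f w + μ k * C < f z + 2*ε/3 := by
    have : Set.Iio (f z + 2*ε/3) ∈ nhds (f w) := Iio_mem_nhds (by linarith)
    exact hlim2.eventually this
  -- frequently f (zmin (μ k)) close to f zstar
  have hV : f ⁻¹' Set.Ioi (f zstar - ε/3) ∈ nhds zstar := by
    apply hf.continuousAt.preimage_mem_nhds
    exact Ioi_mem_nhds (by linarith)
  have hfreq : ∃ᶠ k in atTop, zmin (μ k) ∈ f ⁻¹' Set.Ioi (f zstar - ε/3) :=
    mapClusterPt_iff_frequently.1 hcluster _ hV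
  obtain ⟨k, hk1, hk2⟩ := (hfreq.and_eventually hev).exists
  have h4 : f zstar - ε/3 < f (zmin (μ k)) := hk1
  have h5 := hkey k
  calc f zstar ≤ f (zmin (μ k)) + ε/3 := by linarith
    _ ≤ (f w + μ k * C) + ε/3 := by linarith
    _ ≤ f z + ε := by linarith
end

section
/- With the notation of the barrier method (f, cᵢ continuous, B_μ(z) = f(z) − μ Σᵢ ln(cᵢ(z)) minimised over the strictly feasible set F° = {z : cᵢ(z) > 0 for all i}), let 0 < μ₁ < μ₂ and let z_{μ₁}, z_{μ₂} be minimisers of B_{μ₁}, B_{μ₂} over F° respectively. Then f(z_{μ₁}) ≤ f(z_{μ₂}); i.e., the objective value at the barrier minimiser is monotonically non-increasing as the barrier weight μ decreases. -/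
open Set Finset

/-- Monotonicity of the objective along the barrier path: if `z₁` and `z₂` minimise the
barrier functions `B_{μ₁}` and `B_{μ₂}` over the strictly feasible set
`F° = {z | ∀ i, c i z > 0}` for barrier weights `0 < μ₁ < μ₂`, then `f z₁ ≤ f z₂`. -/
theorem barrier_objective_monotone (n m : ℕ)
    (f : (Fin n → ℝ) → ℝ) (hf : Continuous f)
    (c : Fin m → (Fin n → ℝ) → ℝ) (hc : ∀ i, Continuous (c i))
    (Fint : Set (Fin n → ℝ)) (hFint : Fint = {z | ∀ i, 0 < c i z})
    (B : ℝ → (Fin n → ℝ) → ℝ)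
    (hB : ∀ μ z, B μ z = f z - μ * ∑ i : Fin m, Real.log (c i z))
    (μ₁ μ₂ : ℝ) (hμ₁ : 0 < μ₁) (hμ₁₂ : μ₁ < μ₂)
    (z₁ z₂ : Fin n → ℝ)
    (hz₁ : z₁ ∈ Fint ∧ ∀ z ∈ Fint, B μ₁ z₁ ≤ B μ₁ z)
    (hz₂ : z₂ ∈ Fint ∧ ∀ z ∈ Fint, B μ₂ z₂ ≤ B μ₂ z) :
    f z₁ ≤ f z₂ := by
  have h1 := hz₁.2 z₂ hz₂.1
  have h2 := hz₂.2 z₁ hz₁.1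
  rw [hB, hB] at h1 h2
  nlinarith [h1, h2, mul_pos hμ₁ (sub_pos.mpr hμ₁₂)]
end
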